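/- Let 3/4 < p < 1 and t ≥ 0. Then (1/s_n²)·∑_{k=n+1}^{n+⌊nt⌋} a_k² → 1 − (1+t)^{3−4p} as n → ∞. -/

import Mathlib

open Filter Finset

/-- `a p n = Γ(2p)·Γ(n)/Γ(n+2p−1)`. -/
noncomputable def a (p : ℝ) (n : ℕ) : ℝ :=
  Real.Gamma (2*p) * Real.Gamma n / Real.Gamma ((n:ℝ) + 2*p - 1)

/-- `s p n = (Γ(2p)/√(4p−3))·n^{3/2−2p}`. -/
noncomputable def s (p : ℝ) (n : ℕ) : ℝ :=
  Real.Gamma (2*p) / Real.sqrt (4*p - 3) * (n:ℝ) ^ ((3:ℝ)/2 - 2*p)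

lemma gamma_prod (σ : ℝ) (hs : 0 < σ) (n : ℕ) :
    Real.Gamma σ * ∏ j ∈ Finset.range (n+1), (σ + j) = Real.Gamma (σ + n + 1) := by
  induction n with
  | zero => simp [Real.Gamma_add_one hs.ne', mul_comm]
  | succ n ih =>
      rw [Finset.prod_range_succ, ← mul_assoc, ih]
      have h : (σ + (n+1) : ℝ) ≠ 0 := by positivity
      rw [show (σ + ((n:ℕ)+1:ℕ) + 1 : ℝ) = (σ + (n+1)) + 1 by push_cast; ring,
        Real.Gamma_add_one h]
      push_cast
      ring

lemma gamma_ratio (σ : ℝ) (hs : 0 < σ) :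
    Tendsto (fun n : ℕ => Real.Gamma n * (n:ℝ)^σ / Real.Gamma ((n:ℝ) + σ)) atTop (nhds 1) := by
  have hΓ : Real.Gamma σ ≠ 0 := (Real.Gamma_pos_of_pos hs).ne'
  have h1 : Tendsto (fun n : ℕ => Real.GammaSeq σ n / Real.Gamma σ) atTop (nhds 1) := by
    simpa [div_self hΓ] using (Real.GammaSeq_tendsto_Gamma σ).div_const (Real.Gamma σ)
  have h2 : ∀ n : ℕ, 1 ≤ n →
      Real.GammaSeq σ n / Real.Gamma σ = (n:ℝ)^σ * Real.Gamma ((n:ℝ)+1) / Real.Gamma ((n:ℝ)+1+σ) := by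
    intro n hn
    have hprod := gamma_prod σ hs n
    have hfact : Real.Gamma ((n:ℝ)+1) = (n.factorial : ℝ) := Real.Gamma_nat_eq_factorial n
    have hΓ2 : Real.Gamma (σ + n + 1) ≠ 0 := (Real.Gamma_pos_of_pos (by positivity)).ne'
    have hprodne : (∏ j ∈ Finset.range (n+1), (σ + (j:ℝ))) ≠ 0 := by
      intro h0
      rw [h0, mul_zero] at hprod
      exact hΓ2 hprod.symm
    rw [Real.GammaSeq, hfact.symm, show ((n:ℝ)+1+σ) = σ + n + 1 by ring, ← hprod]
    field_simp
  have h3 : Tendsto (fun n : ℕ => (((n:ℝ)+1)/n)^σ) atTop (nhds 1) := by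
    have : Tendsto (fun n : ℕ => ((n:ℝ)+1)/n) atTop (nhds 1) := by
      have := (tendsto_natCast_atTop_atTop (R := ℝ)).inv_tendsto_atTop
      have h := this.const_add 1
      rw [add_zero] at h
      apply h.congr'
      filter_upwards [eventually_ge_atTop 1] with n hn
      have : (n:ℝ) ≠ 0 := by positivity
      simp only [Pi.inv_apply]
      field_simp
    simpa using (this.rpow_const (Or.inl one_ne_zero))
  -- combine: Γ(n+1)(n+1)^σ/Γ(n+1+σ) → 1
  have h4 : Tendsto (fun n : ℕ => Real.Gamma ((n:ℝ)+1) * ((n:ℝ)+1)^σ / Real.Gamma ((n:ℝ)+1+σ))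
      atTop (nhds 1) := by
    have := h1.mul h3
    rw [mul_one] at this
    apply this.congr'
    filter_upwards [eventually_ge_atTop 1] with n hn
    have hn0 : (0:ℝ) < n := by exact_mod_cast hn
    rw [h2 n hn]
    rw [Real.div_rpow (by positivity) (by positivity : (0:ℝ) ≤ (n:ℝ))]
    have hns : (n:ℝ)^σ ≠ 0 := by positivity
    field_simp
  rw [← Filter.tendsto_add_atTop_iff_nat 1]
  apply h4.congr'
  filter_upwards [eventually_ge_atTop 1] with n hn
  push_cast
  ring_nf

lemma T_bounds (p : ℝ) (hp : 3/4 < p) (hp' : p < 1) (n m : ℕ) (hn : 1 ≤ n) :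
    (((n:ℝ)+1)/n) ^ (3-4*p) - (((n:ℝ)+1+m)/n) ^ (3-4*p)
      ≤ (4*p-3) * (n:ℝ)^(4*p-3) * ∑ k ∈ Finset.Icc (n+1) (n+m), (k:ℝ)^(2-4*p) ∧
    (4*p-3) * (n:ℝ)^(4*p-3) * ∑ k ∈ Finset.Icc (n+1) (n+m), (k:ℝ)^(2-4*p)
      ≤ 1 - (((n:ℝ)+m)/n) ^ (3-4*p) := by
  set α : ℝ := 2 - 4*p with hα_def
  set β : ℝ := 3 - 4*p with hβ_def
  have hβα : β = α + 1 := by rw [hα_def, hβ_def]; ring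
  have hα : α ≤ 0 := by rw [hα_def]; linarith
  have hα1 : α ≠ -1 := by rw [hα_def]; intro h; linarith
  have hβ0 : β < 0 := by rw [hβ_def]; linarith
  have hn0 : (0:ℝ) < n := by exact_mod_cast hn
  have hposc : (0:ℝ) < 4*p-3 := by linarith
  have hpos : 0 < (4*p-3) * (n:ℝ)^(4*p-3) :=
    mul_pos hposc (Real.rpow_pos_of_pos hn0 _)
  -- reindex the sum
  have hre : ∑ k ∈ Finset.Icc (n+1) (n+m), ((k:ℝ))^α
      = ∑ i ∈ Finset.range m, (((n+1+i : ℕ):ℝ))^α := by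
    rw [← Finset.Ico_add_one_right_eq_Icc, Finset.sum_Ico_eq_sum_range]
    have : n + m + 1 - (n + 1) = m := by omega
    rw [this]
  have hanti : ∀ x₀ : ℝ, 1 ≤ x₀ → AntitoneOn (fun x : ℝ => x ^ α) (Set.Icc x₀ (x₀ + m)) := by
    intro x₀ hx₀
    apply (Real.antitoneOn_rpow_Ioi_of_exponent_nonpos hα).mono
    intro x hx
    exact lt_of_lt_of_le one_pos (le_trans hx₀ hx.1)
  -- integral values
  have hint : ∀ x₀ : ℝ, 1 ≤ x₀ → ∫ x in x₀..(x₀ + m), x ^ α = ((x₀+m)^β - x₀^β)/β := by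
    intro x₀ hx₀
    rw [integral_rpow (Or.inr ⟨hα1, ?_⟩), hβα]
    rw [Set.uIcc_of_le (by linarith [m.cast_nonneg (α := ℝ)])]
    intro h0
    have := h0.1
    linarith
  -- upper bound
  have hub : ∑ k ∈ Finset.Icc (n+1) (n+m), ((k:ℝ))^α ≤ (((n:ℝ)+m)^β - (n:ℝ)^β)/β := by
    rw [hre, ← hint (n:ℝ) (by exact_mod_cast hn)]
    have := (hanti (n:ℝ) (by exact_mod_cast hn)).sum_le_integral (a := m)
    refine le_trans (le_of_eq ?_) this
    apply Finset.sum_congr rfl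
    intro i _
    congr 1
    push_cast
    ring
  -- lower bound
  have hlb : (((n:ℝ)+1+m)^β - ((n:ℝ)+1)^β)/β ≤ ∑ k ∈ Finset.Icc (n+1) (n+m), ((k:ℝ))^α := by
    rw [hre, ← hint ((n:ℝ)+1) (by linarith)]
    have := (hanti ((n:ℝ)+1) (by linarith)).integral_le_sum (a := m)
    refine le_trans this (le_of_eq ?_)
    apply Finset.sum_congr rfl
    intro i _
    congr 1
    push_cast
    ring
  have hnb : (0:ℝ) < (n:ℝ)^β := Real.rpow_pos_of_pos hn0 _
  have hβne : β ≠ 0 := hβ0.ne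
  have hnbne : ((n:ℝ))^β ≠ 0 := hnb.ne'
  have hexp : (n:ℝ)^(4*p-3) = ((n:ℝ)^β)⁻¹ := by
    rw [show (4*p-3 : ℝ) = -β by rw [hβ_def]; ring, Real.rpow_neg hn0.le]
  constructor
  · refine le_trans (le_of_eq ?_) (by exact (mul_le_mul_of_nonneg_left hlb hpos.le))
    rw [Real.div_rpow (by linarith) hn0.le, Real.div_rpow (by positivity) hn0.le, hexp]
    have h43 : (4*p-3:ℝ) = -β := by rw [hβ_def]; ring
    rw [h43]
    field_simp
    ring
  · refine le_trans (mul_le_mul_of_nonneg_left hub hpos.le) (le_of_eq ?_)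
    rw [Real.div_rpow (by positivity) hn0.le, hexp]
    have h43 : (4*p-3:ℝ) = -β := by rw [hβ_def]; ring
    rw [h43]
    field_simp
    ring

lemma floor_div_lim (t : ℝ) (ht : 0 ≤ t) :
    Tendsto (fun n : ℕ => (⌊(n:ℝ)*t⌋₊:ℝ)/n) atTop (nhds t) := by
  have h := (tendsto_nat_floor_mul_div_atTop (R := ℝ) ht).comp
    (tendsto_natCast_atTop_atTop (R := ℝ))
  simpa [Function.comp_def, mul_comm] using h

lemma inv_nat_lim : Tendsto (fun n : ℕ => ((n:ℝ))⁻¹) atTop (nhds 0) :=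
  (tendsto_natCast_atTop_atTop (R := ℝ)).inv_tendsto_atTop

lemma T_lim (p : ℝ) (hp : 3/4 < p) (hp' : p < 1) (t : ℝ) (ht : 0 ≤ t) :
    Tendsto (fun n : ℕ => (4*p-3) * (n:ℝ)^(4*p-3) *
        ∑ k ∈ Finset.Icc (n+1) (n + ⌊(n:ℝ)*t⌋₊), (k:ℝ)^(2-4*p))
      atTop (nhds (1 - (1 + t) ^ (3 - 4*p))) := by
  have h1t : (0:ℝ) < 1 + t := by linarith
  have hm := floor_div_lim t ht
  have hu : Tendsto (fun n : ℕ => ((n:ℝ) + ⌊(n:ℝ)*t⌋₊)/n) atTop (nhds (1+t)) := by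
    apply (hm.const_add 1).congr'
    filter_upwards [eventually_ge_atTop 1] with n hn
    have hn0 : ((n:ℝ)) ≠ 0 := by positivity
    field_simp
  have hv : Tendsto (fun n : ℕ => ((n:ℝ) + 1 + ⌊(n:ℝ)*t⌋₊)/n) atTop (nhds (1+t)) := by
    have h := ((hm.add inv_nat_lim).const_add 1)
    rw [add_zero] at h
    apply h.congr'
    filter_upwards [eventually_ge_atTop 1] with n hn
    have hn0 : ((n:ℝ)) ≠ 0 := by positivity
    field_simp
    ring
  have hw : Tendsto (fun n : ℕ => ((n:ℝ) + 1)/n) atTop (nhds 1) := by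
    have h := inv_nat_lim.const_add 1
    rw [add_zero] at h
    apply h.congr'
    filter_upwards [eventually_ge_atTop 1] with n hn
    have hn0 : ((n:ℝ)) ≠ 0 := by positivity
    field_simp
  have hlo : Tendsto (fun n : ℕ => (((n:ℝ)+1)/n) ^ (3-4*p) - (((n:ℝ)+1+⌊(n:ℝ)*t⌋₊)/n) ^ (3-4*p))
      atTop (nhds (1 - (1+t)^(3-4*p))) := by
    have := (Tendsto.rpow_const (p := 3-4*p) hw (Or.inl one_ne_zero)).sub
      (Tendsto.rpow_const (p := 3-4*p) hv (Or.inl h1t.ne'))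
    simpa using this
  have hhi : Tendsto (fun n : ℕ => 1 - (((n:ℝ)+⌊(n:ℝ)*t⌋₊)/n) ^ (3-4*p))
      atTop (nhds (1 - (1+t)^(3-4*p))) :=
    tendsto_const_nhds.sub (Tendsto.rpow_const (p := 3-4*p) hu (Or.inl h1t.ne'))
  apply tendsto_of_tendsto_of_tendsto_of_le_of_le' hlo hhi
  · filter_upwards [eventually_ge_atTop 1] with n hn
    exact (T_bounds p hp hp' n _ hn).1
  · filter_upwards [eventually_ge_atTop 1] with n hn
    exact (T_bounds p hp hp' n _ hn).2

lemma a_ratio_lim (p : ℝ) (hp : 3/4 < p) (hp' : p < 1) :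
    Tendsto (fun k : ℕ => a p k ^ 2 / (Real.Gamma (2*p) ^ 2 * (k:ℝ)^(2-4*p)))
      atTop (nhds 1) := by
  have hs2 : 0 < 2*p - 1 := by linarith
  have hg := gamma_ratio (2*p-1) hs2
  have h := hg.mul hg
  rw [mul_one] at h
  apply h.congr'
  filter_upwards [eventually_ge_atTop 1] with k hk
  have hk0 : (0:ℝ) < k := by exact_mod_cast hk
  have hΓp : (0:ℝ) < Real.Gamma (2*p) := Real.Gamma_pos_of_pos (by linarith)
  have hΓk : (0:ℝ) < Real.Gamma ((k:ℝ) + (2*p-1)) := Real.Gamma_pos_of_pos (by linarith)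
  have harg : ((k:ℝ) + 2*p - 1) = (k:ℝ) + (2*p-1) := by ring
  have hks : ((k:ℝ))^(2-4*p) = ((k:ℝ)^(2*p-1) * (k:ℝ)^(2*p-1))⁻¹ := by
    rw [← Real.rpow_add hk0, ← Real.rpow_neg hk0.le]
    congr 1
    ring
  have hkp : (0:ℝ) < (k:ℝ)^(2*p-1) := Real.rpow_pos_of_pos hk0 _
  rw [a, harg, hks]
  field_simp

lemma s_sq (p : ℝ) (hp : 3/4 < p) (hp' : p < 1) (n : ℕ) (hn : 1 ≤ n) :
    1 / (s p n)^2 = (4*p-3) * (n:ℝ)^(4*p-3) / Real.Gamma (2*p)^2 := by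
  have hn0 : (0:ℝ) < n := by exact_mod_cast hn
  have hΓp : (0:ℝ) < Real.Gamma (2*p) := Real.Gamma_pos_of_pos (by linarith)
  have h43 : (0:ℝ) < 4*p - 3 := by linarith
  have hsq : ((n:ℝ) ^ ((3:ℝ)/2 - 2*p))^2 = (n:ℝ)^((3:ℝ) - 4*p) := by
    rw [← Real.rpow_natCast ((n:ℝ) ^ ((3:ℝ)/2 - 2*p)) 2, ← Real.rpow_mul hn0.le]
    congr 1
    push_cast
    ring
  have hexp : (n:ℝ)^(4*p-3) = ((n:ℝ)^((3:ℝ)-4*p))⁻¹ := by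
    rw [show (4*p-3 : ℝ) = -(3-4*p) by ring, Real.rpow_neg hn0.le]
  rw [s, mul_pow, div_pow, Real.sq_sqrt h43.le, hsq, hexp]
  have h1 : (0:ℝ) < (n:ℝ)^((3:ℝ)-4*p) := Real.rpow_pos_of_pos hn0 _
  field_simp

theorem stmt_13 (p : ℝ) (hp : 3/4 < p) (hp' : p < 1) (t : ℝ) (ht : 0 ≤ t) :
    Filter.Tendsto
      (fun n : ℕ => (1 / (s p n)^2) *
        ∑ k ∈ Finset.Icc (n+1) (n + ⌊(n:ℝ) * t⌋₊), (a p k)^2)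
      Filter.atTop (nhds (1 - (1 + t) ^ (3 - 4*p))) := by
  have hΓp : (0:ℝ) < Real.Gamma (2*p) := Real.Gamma_pos_of_pos (by linarith)
  have hc : (0:ℝ) < Real.Gamma (2*p)^2 := by positivity
  set c := Real.Gamma (2*p)^2 with hc_def
  have hr := a_ratio_lim p hp hp'
  have hT := T_lim p hp hp' t ht
  set L := 1 - (1+t)^(3-4*p) with hL_def
  rw [Metric.tendsto_atTop]
  intro ε hε
  set δ := min 1 (ε / (2*(|L|+2))) with hδ_def
  have habsL : (0:ℝ) < |L| + 2 := by positivity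
  have hδ0 : 0 < δ := lt_min one_pos (by positivity)
  have hδ1 : δ ≤ 1 := min_le_left _ _
  have hδε : δ ≤ ε / (2*(|L|+2)) := min_le_right _ _
  obtain ⟨N₁, hN₁⟩ := (Metric.tendsto_atTop.mp hr) δ hδ0
  obtain ⟨N₂, hN₂⟩ := (Metric.tendsto_atTop.mp hT) δ hδ0
  refine ⟨max (max N₁ N₂) 1, fun n hn => ?_⟩
  have hn1 : 1 ≤ n := le_trans (le_max_right _ _) hn
  have hnN₁ : N₁ ≤ n := le_trans (le_trans (le_max_left _ _) (le_max_left _ _)) hn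
  have hnN₂ : N₂ ≤ n := le_trans (le_trans (le_max_right _ _) (le_max_left _ _)) hn
  have hn0 : (0:ℝ) < n := by exact_mod_cast hn1
  set m := ⌊(n:ℝ)*t⌋₊ with hm_def
  set S := ∑ k ∈ Finset.Icc (n+1) (n+m), (k:ℝ)^(2-4*p) with hS_def
  set A := ∑ k ∈ Finset.Icc (n+1) (n+m), (a p k)^2 with hA_def
  set T := (4*p-3) * (n:ℝ)^(4*p-3) * S with hT_def
  have hfac : (0:ℝ) < (4*p-3) * (n:ℝ)^(4*p-3) :=
    mul_pos (by linarith) (Real.rpow_pos_of_pos hn0 _)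
  have hS0 : 0 ≤ S := Finset.sum_nonneg fun k _ => Real.rpow_nonneg (Nat.cast_nonneg k) _
  have hT0 : 0 ≤ T := mul_nonneg hfac.le hS0
  have hTd : |T - L| < δ := by
    have := hN₂ n hnN₂
    rwa [Real.dist_eq] at this
  have hterm : ∀ k ∈ Finset.Icc (n+1) (n+m),
      |(a p k)^2 - c * (k:ℝ)^(2-4*p)| ≤ δ * (c * (k:ℝ)^(2-4*p)) := by
    intro k hk
    have hkmem := Finset.mem_Icc.mp hk
    have hkN : N₁ ≤ k := le_trans (le_trans hnN₁ (Nat.le_succ n)) hkmem.1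
    have hk1 : 1 ≤ k := le_trans (le_trans hn1 (Nat.le_succ n)) hkmem.1
    have hk0 : (0:ℝ) < k := by exact_mod_cast hk1
    have hck : (0:ℝ) < c * (k:ℝ)^(2-4*p) :=
      mul_pos hc (Real.rpow_pos_of_pos hk0 _)
    have hd := hN₁ k hkN
    rw [Real.dist_eq] at hd
    have key : ((a p k)^2 / (c*(k:ℝ)^(2-4*p)) - 1) * (c*(k:ℝ)^(2-4*p))
        = (a p k)^2 - c*(k:ℝ)^(2-4*p) := by
      field_simp
    rw [← key, abs_mul, abs_of_pos hck]
    exact mul_le_mul_of_nonneg_right hd.le hck.le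
  have hsum : |A - c * S| ≤ δ * (c * S) := by
    have h1 : A - c*S = ∑ k ∈ Finset.Icc (n+1) (n+m),
        ((a p k)^2 - c*(k:ℝ)^(2-4*p)) := by
      rw [hA_def, hS_def, Finset.sum_sub_distrib, Finset.mul_sum]
    rw [h1]
    calc |∑ k ∈ Finset.Icc (n+1) (n+m), ((a p k)^2 - c*(k:ℝ)^(2-4*p))|
        ≤ ∑ k ∈ Finset.Icc (n+1) (n+m), |(a p k)^2 - c*(k:ℝ)^(2-4*p)| :=
          Finset.abs_sum_le_sum_abs _ _
      _ ≤ ∑ k ∈ Finset.Icc (n+1) (n+m), δ * (c * (k:ℝ)^(2-4*p)) :=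
          Finset.sum_le_sum hterm
      _ = δ * (c * S) := by rw [hS_def, Finset.mul_sum, Finset.mul_sum]
  have hx : (1/(s p n)^2) * A = (4*p-3) * (n:ℝ)^(4*p-3) / c * A := by
    rw [s_sq p hp hp' n hn1]
  have hxT : |(1/(s p n)^2) * A - T| ≤ δ * T := by
    rw [hx]
    have heq : (4*p-3) * (n:ℝ)^(4*p-3) / c * A - T
        = ((4*p-3) * (n:ℝ)^(4*p-3) / c) * (A - c*S) := by
      rw [hT_def]
      field_simp
    rw [heq, abs_mul, abs_of_pos (by positivity)]
    calc (4*p-3) * (n:ℝ)^(4*p-3) / c * |A - c*S|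
        ≤ (4*p-3) * (n:ℝ)^(4*p-3) / c * (δ * (c*S)) :=
          mul_le_mul_of_nonneg_left hsum (by positivity)
      _ = δ * T := by rw [hT_def]; field_simp
  have hT_le : T ≤ |L| + 1 := by
    have h1 : |T| - |L| ≤ |T - L| := abs_sub_abs_le_abs_sub _ _
    have h2 : T ≤ |T| := le_abs_self T
    linarith
  rw [Real.dist_eq]
  have htri : |(1/(s p n)^2) * A - L| ≤ |(1/(s p n)^2) * A - T| + |T - L| := abs_sub_le _ _ _
  have hmain : |(1/(s p n)^2) * A - L| ≤ δ * (|L|+2) := by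
    have := mul_le_mul_of_nonneg_left hT_le hδ0.le
    linarith
  have hfin : δ * (|L|+2) < ε := by
    have h1 : δ * (|L|+2) ≤ ε / (2*(|L|+2)) * (|L|+2) :=
      mul_le_mul_of_nonneg_right hδε habsL.le
    have h2 : ε / (2*(|L|+2)) * (|L|+2) = ε/2 := by field_simp
    linarith
  exact lt_of_le_of_lt hmain hfin
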